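/- For all multi-indices r, k ∈ I and every φ : A → M: if r ≤ k then ∇_r(ε^k_φ) = (−1)^{|r|} · ε^{k−r}_φ, and if r ≤ k fails then ∇_r(ε^k_φ) = 0. -/
import Mathlib


/-- The covariant-derivative operator on families `ζ : A × I → M`, `I = (Fin m → ℕ)`:
`(∇_μ ζ)(α, i) = D_μ (ζ (α, i)) − ζ (α, i + e_μ)`. -/
def nab {R : Type*} [CommRing R] {M : Type*} [AddCommGroup M] [Module R M]
    {m : ℕ} {A : Type*} (D : Fin m → Module.End R M) (μ : Fin m)
    (ζ : A × (Fin m → ℕ) → M) : A × (Fin m → ℕ) → M :=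
  fun p => D μ (ζ p) - ζ (p.1, p.2 + Pi.single μ 1)

/-- Iterated composition `g_1^{j^1} ∘ … ∘ g_m^{j^m}` of a family of maps, used for
`D_j = D_1^{j^1} ∘ … ∘ D_m^{j^m}` and `∇_r = ∇_1^{r^1} ∘ … ∘ ∇_m^{r^m}`. -/
def multiIter {β : Type*} {m : ℕ} (g : Fin m → β → β) (j : Fin m → ℕ) : β → β :=
  (List.ofFn fun μ => (g μ)^[j μ]).foldr (· ∘ ·) id

/-- The basic graded families `ε^k_φ (α, i) = C(i,k) • D_{i−k} (φ α)` for `k ≤ i`,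
and `ε^k_φ (α, i) = 0` otherwise. -/
def eps {R : Type*} [CommRing R] {M : Type*} [AddCommGroup M] [Module R M]
    {m : ℕ} {A : Type*} (D : Fin m → Module.End R M) (k : Fin m → ℕ) (φ : A → M) :
    A × (Fin m → ℕ) → M :=
  fun p => if ∀ μ, k μ ≤ p.2 μ then
    (∏ μ, Nat.choose (p.2 μ) (k μ)) • multiIter (fun μ => ⇑(D μ)) (p.2 - k) (φ p.1)
  else 0

lemma pi_single_succ {m : ℕ} (μ ν : Fin m) (a : ℕ) :
    (Pi.single (μ.succ) a : Fin (m+1) → ℕ) (ν.succ) = (Pi.single μ a : Fin m → ℕ) ν := by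
  by_cases hν : ν = μ
  · subst hν; simp
  · rw [Pi.single_eq_of_ne (fun hc => hν (Fin.succ_injective _ hc)), Pi.single_eq_of_ne hν]

lemma multiIter_cons {β : Type*} {m : ℕ} (g : Fin (m+1) → β → β) (j : Fin (m+1) → ℕ) :
    multiIter g j = (g 0)^[j 0] ∘ multiIter (fun μ => g μ.succ) (fun μ => j μ.succ) := by
  unfold multiIter
  rw [List.ofFn_succ]
  rfl

lemma iter_val {β : Type*} {m : ℕ} (g : Fin m → β → β) (val : (Fin m → ℕ) → β)
    (h : ∀ r μ, g μ (val r) = val (r + Pi.single μ 1)) (μ : Fin m) :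
    ∀ (n : ℕ) (r : Fin m → ℕ), (g μ)^[n] (val r) = val (r + Pi.single μ n) := by
  intro n
  induction n with
  | zero => intro r; simp
  | succ n ih =>
    intro r
    rw [Function.iterate_succ_apply, h, ih]
    congr 1
    rw [add_assoc, ← Pi.single_add]
    norm_num [add_comm]

lemma multiIter_val {β : Type*} : ∀ {m : ℕ} (g : Fin m → β → β) (val : (Fin m → ℕ) → β),
    (∀ r μ, g μ (val r) = val (r + Pi.single μ 1)) →
    ∀ (j r : Fin m → ℕ), multiIter g j (val r) = val (r + j) := by
  intro m
  induction m with
  | zero =>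
    intro g val h j r
    have : multiIter g j = id := rfl
    rw [this, id_eq]
    congr 1
    funext ν
    exact ν.elim0
  | succ m ih =>
    intro g val h j r
    rw [multiIter_cons, Function.comp_apply]
    have hstep' : ∀ (s : Fin m → ℕ) (μ : Fin m),
        (fun ν => g (Fin.succ ν)) μ (val (r + Fin.cons 0 s)) =
          val (r + Fin.cons 0 (s + Pi.single μ 1)) := by
      intro s μ
      show g μ.succ (val (r + Fin.cons 0 s)) = _
      rw [h]
      congr 1
      funext ν
      refine Fin.cases ?_ ?_ ν
      · simp [Pi.single_eq_of_ne (Fin.succ_ne_zero μ).symm]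
      · intro ν
        simp only [Pi.add_apply, Fin.cons_succ, pi_single_succ, add_assoc]
    have h0 : val r = val (r + Fin.cons 0 (0 : Fin m → ℕ)) := by
      congr 1
      funext ν
      refine Fin.cases (by simp) (fun ν => by simp) ν
    have key := ih (fun ν => g (Fin.succ ν)) (fun s => val (r + Fin.cons 0 s)) hstep'
        (fun μ => j μ.succ) 0
    simp only [zero_add] at key
    rw [h0, key, iter_val g val h 0 (j 0)]
    congr 1
    funext ν
    refine Fin.cases ?_ ?_ ν
    · simp [Pi.single_eq_same]
    · intro ν
      simp [Pi.single_eq_of_ne (Fin.succ_ne_zero ν)]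

lemma comm_iterate {β : Type*} (f h : β → β) (hc : ∀ x, f (h x) = h (f x)) :
    ∀ (n : ℕ) (x : β), f (h^[n] x) = h^[n] (f x) := by
  intro n
  induction n with
  | zero => intro x; simp
  | succ n ih => intro x; rw [Function.iterate_succ_apply, Function.iterate_succ_apply, ih, hc]

lemma multiIter_single_add {β : Type*} : ∀ {m : ℕ} (g : Fin m → β → β),
    (∀ μ ν x, g μ (g ν x) = g ν (g μ x)) →
    ∀ (j : Fin m → ℕ) (μ : Fin m) (x : β),
      multiIter g (j + Pi.single μ 1) x = g μ (multiIter g j x) := by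
  intro m
  induction m with
  | zero => intro g hg j μ x; exact μ.elim0
  | succ m ih =>
    intro g hg j μ x
    rw [multiIter_cons, multiIter_cons, Function.comp_apply, Function.comp_apply]
    refine Fin.cases ?_ ?_ μ
    · have h1 : (j + Pi.single (0 : Fin (m+1)) 1 : Fin (m+1) → ℕ) 0 = j 0 + 1 := by simp
      have h2 : ∀ ν : Fin m, (j + Pi.single (0 : Fin (m+1)) 1 : Fin (m+1) → ℕ) ν.succ = j ν.succ := by
        intro ν
        simp [Pi.single_eq_of_ne (Fin.succ_ne_zero ν)]
      simp only [h1, h2]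
      rw [Function.iterate_succ_apply']
    · intro μ
      have h1 : (j + Pi.single (μ.succ) 1 : Fin (m+1) → ℕ) 0 = j 0 := by
        simp [Pi.single_eq_of_ne (Fin.succ_ne_zero μ).symm]
      have h2 : ∀ ν : Fin m, (j + Pi.single (μ.succ) 1 : Fin (m+1) → ℕ) ν.succ =
          ((fun ν => j ν.succ) + Pi.single μ 1 : Fin m → ℕ) ν := by
        intro ν
        simp [pi_single_succ]
      simp only [h1]
      have heq : (fun ν => (j + Pi.single μ.succ 1 : Fin (m+1) → ℕ) ν.succ) =
          ((fun ν => j ν.succ) + Pi.single μ 1 : Fin m → ℕ) := by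
        funext ν; exact h2 ν
      rw [heq, ih (fun ν => g ν.succ) (fun a b x => hg _ _ x) (fun ν => j ν.succ) μ x]
      exact (comm_iterate (g μ.succ) (g 0) (fun y => hg μ.succ 0 y) (j 0) _).symm


section
variable {R : Type*} [CommRing R] {M : Type*} [AddCommGroup M] [Module R M]
  {m : ℕ} {A : Type*}

lemma nab_eps_of_eq_zero (D : Fin m → Module.End R M)
    (hD : ∀ μ ν : Fin m, ∀ x : M, D μ (D ν x) = D ν (D μ x))
    (μ : Fin m) (k : Fin m → ℕ) (hk : k μ = 0) (φ : A → M) :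
    nab D μ (eps D k φ) = (0 : A × (Fin m → ℕ) → M) := by
  funext p
  obtain ⟨α, i⟩ := p
  show D μ (eps D k φ (α, i)) - eps D k φ (α, i + Pi.single μ 1) = 0
  by_cases h : ∀ ν, k ν ≤ i ν
  · have h' : ∀ ν, k ν ≤ (i + Pi.single μ 1 : Fin m → ℕ) ν := fun ν =>
      le_trans (h ν) (Nat.le_add_right _ _)
    simp only [eps]
    rw [if_pos h, if_pos h']
    have hC : (∏ ν, Nat.choose ((i + Pi.single μ 1 : Fin m → ℕ) ν) (k ν)) =
        ∏ ν, Nat.choose (i ν) (k ν) := by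
      refine Finset.prod_congr rfl fun ν _ => ?_
      by_cases hν : ν = μ
      · subst hν; simp [hk]
      · simp [Pi.single_eq_of_ne hν]
    have hT : (i + Pi.single μ 1 - k : Fin m → ℕ) = (i - k) + Pi.single μ 1 := by
      funext ν
      by_cases hν : ν = μ
      · subst hν
        simp only [Pi.sub_apply, Pi.add_apply, Pi.single_eq_same, hk]
        omega
      · simp [Pi.single_eq_of_ne hν]
    rw [hC, hT, multiIter_single_add _ (fun a b x => hD a b x), map_nsmul, sub_self]
  · push_neg at h
    obtain ⟨ν, hν⟩ := h
    have hνμ : ν ≠ μ := by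
      intro hc; subst hc; omega
    have h2 : ¬ ∀ ν', k ν' ≤ (i + Pi.single μ 1 : Fin m → ℕ) ν' := by
      intro hall
      have := hall ν
      simp only [Pi.add_apply, Pi.single_eq_of_ne hνμ, add_zero] at this
      omega
    simp only [eps]
    rw [if_neg (by push_neg; exact ⟨ν, by omega⟩), if_neg h2, map_zero, sub_zero]

lemma nab_eps_of_pos (D : Fin m → Module.End R M)
    (hD : ∀ μ ν : Fin m, ∀ x : M, D μ (D ν x) = D ν (D μ x))
    (μ : Fin m) (k : Fin m → ℕ) (hk : 1 ≤ k μ) (φ : A → M) :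
    nab D μ (eps D k φ) = fun p => -(eps D (k - Pi.single μ 1) φ p) := by
  funext p
  obtain ⟨α, i⟩ := p
  show D μ (eps D k φ (α, i)) - eps D k φ (α, i + Pi.single μ 1) =
    -(eps D (k - Pi.single μ 1) φ (α, i))
  simp only [eps]
  by_cases h2 : ∀ ν, k ν ≤ (i + Pi.single μ 1 : Fin m → ℕ) ν
  · have h2μ : k μ ≤ i μ + 1 := by
      have := h2 μ; simpa using this
    have h2ν : ∀ ν, ν ≠ μ → k ν ≤ i ν := by
      intro ν hν
      have := h2 ν
      simpa [Pi.single_eq_of_ne hν] using this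
    have h3 : ∀ ν, (k - Pi.single μ 1 : Fin m → ℕ) ν ≤ i ν := by
      intro ν
      by_cases hν : ν = μ
      · subst hν; simp only [Pi.sub_apply, Pi.single_eq_same]; omega
      · simp only [Pi.sub_apply, Pi.single_eq_of_ne hν, Nat.sub_zero]
        exact h2ν ν hν
    -- product decompositions
    set P := ∏ ν ∈ Finset.univ.erase μ, Nat.choose (i ν) (k ν) with hP
    have hC2 : (∏ ν, Nat.choose ((i + Pi.single μ 1 : Fin m → ℕ) ν) (k ν)) =
        Nat.choose (i μ + 1) (k μ) * P := by
      rw [← Finset.mul_prod_erase Finset.univ _ (Finset.mem_univ μ)]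
      congr 1
      · simp
      · refine Finset.prod_congr rfl fun ν hν => ?_
        have : ν ≠ μ := Finset.ne_of_mem_erase hν
        simp [Pi.single_eq_of_ne this]
    have hC3 : (∏ ν, Nat.choose (i ν) ((k - Pi.single μ 1 : Fin m → ℕ) ν)) =
        Nat.choose (i μ) (k μ - 1) * P := by
      rw [← Finset.mul_prod_erase Finset.univ _ (Finset.mem_univ μ)]
      congr 1
      · simp
      · refine Finset.prod_congr rfl fun ν hν => ?_
        have : ν ≠ μ := Finset.ne_of_mem_erase hν
        simp [Pi.single_eq_of_ne this]
    have hTexp : (i + Pi.single μ 1 - k : Fin m → ℕ) = i - (k - Pi.single μ 1) := by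
      funext ν
      by_cases hν : ν = μ
      · subst hν
        simp only [Pi.sub_apply, Pi.add_apply, Pi.single_eq_same]
        omega
      · simp [Pi.single_eq_of_ne hν]
    rw [if_pos h2, if_pos h3, hC2, hC3, hTexp]
    by_cases h1 : ∀ ν, k ν ≤ i ν
    · -- main case
      have hC1 : (∏ ν, Nat.choose (i ν) (k ν)) = Nat.choose (i μ) (k μ) * P :=
        (Finset.mul_prod_erase Finset.univ _ (Finset.mem_univ μ)).symm
      have hT2 : (i - (k - Pi.single μ 1) : Fin m → ℕ) = (i - k) + Pi.single μ 1 := by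
        funext ν
        by_cases hν : ν = μ
        · subst hν
          simp only [Pi.sub_apply, Pi.add_apply, Pi.single_eq_same]
          have := h1 ν; omega
        · simp [Pi.single_eq_of_ne hν]
      have hPascal : Nat.choose (i μ + 1) (k μ) =
          Nat.choose (i μ) (k μ) + Nat.choose (i μ) (k μ - 1) := by
        obtain ⟨t, ht⟩ : ∃ t, k μ = t + 1 := ⟨k μ - 1, by omega⟩
        rw [ht]
        simp [Nat.choose_succ_succ, add_comm]
      rw [if_pos h1, hC1, hT2, multiIter_single_add _ (fun a b x => hD a b x), map_nsmul,
        hPascal, add_mul, add_nsmul]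
      abel
    · -- boundary case : k μ = i μ + 1
      have hμeq : k μ = i μ + 1 := by
        push_neg at h1
        obtain ⟨ν, hν⟩ := h1
        have : ν = μ := by
          by_contra hc
          exact absurd (h2ν ν hc) (by omega)
        subst this
        omega
      rw [if_neg (by push_neg; exact ⟨μ, by omega⟩), map_zero, zero_sub]
      have hcc : Nat.choose (i μ + 1) (k μ) = Nat.choose (i μ) (k μ - 1) := by
        rw [hμeq]; simp
      rw [hcc]
  · -- everything vanishes
    have h1 : ¬ ∀ ν, k ν ≤ i ν := by
      intro hall
      exact h2 fun ν => le_trans (hall ν) (Nat.le_add_right _ _)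
    have h3 : ¬ ∀ ν, (k - Pi.single μ 1 : Fin m → ℕ) ν ≤ i ν := by
      intro hall
      refine h2 fun ν => ?_
      by_cases hν : ν = μ
      · subst hν
        have := hall ν
        simp only [Pi.sub_apply, Pi.single_eq_same] at this
        simp only [Pi.add_apply, Pi.single_eq_same]
        omega
      · have := hall ν
        simp only [Pi.sub_apply, Pi.single_eq_of_ne hν, Nat.sub_zero] at this
        simp only [Pi.add_apply, Pi.single_eq_of_ne hν, add_zero]
        exact this
    rw [if_neg h1, if_neg h2, if_neg h3, map_zero, sub_zero, neg_zero]


lemma nab_zsmul (D : Fin m → Module.End R M) (μ : Fin m) (c : ℤ)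
    (ζ : A × (Fin m → ℕ) → M) : nab D μ (c • ζ) = c • nab D μ ζ := by
  funext p
  simp [nab, smul_sub]

lemma nab_zero (D : Fin m → Module.End R M) (μ : Fin m) :
    nab D μ (0 : A × (Fin m → ℕ) → M) = 0 := by
  funext p
  simp [nab]

/-- The value of `∇_r ε^k_φ`. -/
def valfun (D : Fin m → Module.End R M) (k : Fin m → ℕ) (φ : A → M)
    (r : Fin m → ℕ) : A × (Fin m → ℕ) → M :=
  if ∀ ν, r ν ≤ k ν then ((-1 : ℤ) ^ (∑ ν, r ν)) • eps D (k - r) φ else 0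

lemma nab_valfun (D : Fin m → Module.End R M)
    (hD : ∀ μ ν : Fin m, ∀ x : M, D μ (D ν x) = D ν (D μ x))
    (k : Fin m → ℕ) (φ : A → M) (r : Fin m → ℕ) (μ : Fin m) :
    nab D μ (valfun D k φ r) = valfun D k φ (r + Pi.single μ 1) := by
  by_cases hr : ∀ ν, r ν ≤ k ν
  · by_cases hrμ : r μ + 1 ≤ k μ
    · have hr' : ∀ ν, (r + Pi.single μ 1 : Fin m → ℕ) ν ≤ k ν := by
        intro ν
        by_cases hν : ν = μ
        · subst hν; simpa using hrμ
        · simpa [Pi.single_eq_of_ne hν] using hr ν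
      rw [valfun, valfun, if_pos hr, if_pos hr', nab_zsmul,
        nab_eps_of_pos D hD μ (k - r)
          (by simp only [Pi.sub_apply]; omega) φ]
      have hkk : (k - r - Pi.single μ 1 : Fin m → ℕ) = k - (r + Pi.single μ 1) := by
        funext ν; simp [Nat.sub_sub]
      have hsum : (∑ ν, (r + Pi.single μ 1 : Fin m → ℕ) ν) = (∑ ν, r ν) + 1 := by
        simp only [Pi.add_apply, Finset.sum_add_distrib]
        congr 1
        simp
      rw [hkk, hsum]
      funext p
      simp only [Pi.smul_apply, pow_succ, mul_smul]
      rw [neg_one_zsmul]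
    · have hrμ' : r μ = k μ := by have := hr μ; omega
      have hkr : (k - r : Fin m → ℕ) μ = 0 := by
        simp only [Pi.sub_apply]; omega
      rw [valfun, valfun, if_pos hr,
        if_neg (by
          intro hall
          have := hall μ
          simp only [Pi.add_apply, Pi.single_eq_same] at this
          omega),
        nab_zsmul, nab_eps_of_eq_zero D hD μ (k - r) hkr φ, smul_zero]
  · rw [valfun, valfun, if_neg hr,
      if_neg (fun hall => hr fun ν => le_trans (Nat.le_add_right (r ν) _) (hall ν)),
      nab_zero]


end

/-- For all multi-indices `r, k` and every `φ : A → M`: if `r ≤ k` then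
`∇_r (ε^k_φ) = (−1)^{|r|} • ε^{k−r}_φ`, and if `r ≤ k` fails then `∇_r (ε^k_φ) = 0`. -/
theorem nab_eps {R : Type*} [CommRing R] {M : Type*} [AddCommGroup M] [Module R M]
    {m : ℕ} {A : Type*} (D : Fin m → Module.End R M)
    (hD : ∀ μ ν : Fin m, ∀ x : M, D μ (D ν x) = D ν (D μ x))
    (r k : Fin m → ℕ) (φ : A → M) :
    (r ≤ k → ∀ p : A × (Fin m → ℕ),
      multiIter (fun μ => nab D μ) r (eps D k φ) p =
        ((-1 : ℤ) ^ (∑ μ, r μ)) • eps D (k - r) φ p) ∧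
    (¬ r ≤ k → ∀ p : A × (Fin m → ℕ),
      multiIter (fun μ => nab D μ) r (eps D k φ) p = 0) := by
  have h0 : valfun D k φ 0 = eps D k φ := by
    rw [valfun, if_pos (show ∀ ν, (0 : Fin m → ℕ) ν ≤ k ν from fun ν => Nat.zero_le _)]
    have : (k - 0 : Fin m → ℕ) = k := by funext ν; simp
    simp [this]
  have key := multiIter_val (fun μ => nab D μ) (valfun D k φ)
    (fun s μ => nab_valfun D hD k φ s μ) r 0
  rw [h0, zero_add] at key
  constructor
  · intro hrk p
    rw [key, valfun, if_pos (fun ν => hrk ν)]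
    rfl
  · intro hrk p
    rw [key, valfun, if_neg (fun hall => hrk (fun ν => hall ν))]
    rfl
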